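/- The convex hull of {(x,z) ∈ {0,1}^n × ℝ : z = ψ(x)} equals the set of (x,z) with x ∈ [0,1]^n and ψ_−(x) ≤ z ≤ ψ_+(x), where ψ_−(x) (resp. ψ_+(x)) is the minimum (resp. maximum) of Σ_{ξ∈{0,1}^n} μ(R_ξ(X_1,...,X_n)) ψ(ξ) over all sets X_1,...,X_n ⊆ [0,1), each a finite union of half-open intervals, with μ(X_i) = x_i for all i, and R_ξ(X_1,...,X_n) = {t ∈ [0,1) : for all i, t ∈ X_i iff ξ_i = 1}. -/

import Mathlib

open MeasureTheory Set

/-- A finite union of half-open subintervals of `[0,1)`. -/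
def IsIcoUnion (X : Set ℝ) : Prop :=
  X ⊆ Set.Ico 0 1 ∧ ∃ s : Finset (ℝ × ℝ), X = ⋃ p ∈ s, Set.Ico p.1 p.2

/-- The set of values `∑_{ξ ∈ {0,1}^n} μ(R_ξ(X_1,…,X_n)) ψ(ξ)` over all admissible
families of interval unions with `μ(X_i) = x i`, where `R_ξ` is the set of points
whose membership pattern in the `X_i` equals `ξ`. -/
def zuckerValues (n : ℕ) (ψ : (Fin n → ℝ) → ℝ) (x : Fin n → ℝ) : Set ℝ :=
  {w : ℝ | ∃ X : Fin n → Set ℝ, (∀ i, IsIcoUnion (X i)) ∧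
    (∀ i, (volume (X i)).toReal = x i) ∧
    w = ∑ ξ : Fin n → Bool,
      (volume {t ∈ Set.Ico (0:ℝ) 1 | ∀ i, t ∈ X i ↔ ξ i = true}).toReal
        * ψ (fun i => if ξ i then 1 else 0)}

namespace ZuckerAux

open Classical in
/-- The 0/1 point of `ℝⁿ` associated to a boolean vector. -/
noncomputable def pt (n : ℕ) (ξ : Fin n → Bool) : Fin n → ℝ := fun i => if ξ i then 1 else 0

lemma pt_nonneg {n : ℕ} (ξ : Fin n → Bool) (i : Fin n) : 0 ≤ pt n ξ i := by
  unfold pt; split <;> norm_num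

lemma pt_le_one {n : ℕ} (ξ : Fin n → Bool) (i : Fin n) : pt n ξ i ≤ 1 := by
  unfold pt; split <;> norm_num

lemma pt_inj {n : ℕ} : Function.Injective (pt n) := by
  intro a b h
  funext i
  have h' := congrFun h i
  unfold pt at h'
  cases ha : a i <;> cases hb : b i <;> simp_all

/-- The graph point of `ψ` over the boolean vector `ξ`. -/
noncomputable def gr (n : ℕ) (ψ : (Fin n → ℝ) → ℝ) (ξ : Fin n → Bool) : (Fin n → ℝ) × ℝ :=
  (pt n ξ, ψ (pt n ξ))

lemma gr_inj {n : ℕ} (ψ : (Fin n → ℝ) → ℝ) : Function.Injective (gr n ψ) := by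
  intro a b h
  exact pt_inj (congrArg Prod.fst h)

/-- The pattern set `R_ξ`. -/
def Rset {n : ℕ} (X : Fin n → Set ℝ) (ξ : Fin n → Bool) : Set ℝ :=
  {t ∈ Set.Ico (0:ℝ) 1 | ∀ i, t ∈ X i ↔ ξ i = true}

lemma icoUnion_measurableSet {X : Set ℝ} (h : IsIcoUnion X) : MeasurableSet X := by
  obtain ⟨-, s, rfl⟩ := h
  exact s.measurableSet_biUnion (fun p _ => measurableSet_Ico)

lemma Rset_measurable {n : ℕ} {X : Fin n → Set ℝ} (hX : ∀ i, IsIcoUnion (X i))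
    (ξ : Fin n → Bool) : MeasurableSet (Rset X ξ) := by
  have hR : Rset X ξ = Set.Ico (0:ℝ) 1 ∩ ⋂ i, {t | t ∈ X i ↔ ξ i = true} := by
    ext t; simp [Rset, Set.mem_iInter]
  rw [hR]
  refine measurableSet_Ico.inter (MeasurableSet.iInter fun i => ?_)
  by_cases h : ξ i = true
  · have he : {t | t ∈ X i ↔ ξ i = true} = X i := by ext t; simp [h]
    rw [he]; exact icoUnion_measurableSet (hX i)
  · have he : {t | t ∈ X i ↔ ξ i = true} = (X i)ᶜ := by ext t; simp [h]
    rw [he]; exact (icoUnion_measurableSet (hX i)).compl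

lemma Rset_disjoint {n : ℕ} (X : Fin n → Set ℝ) :
    Pairwise (Function.onFun Disjoint (Rset X)) := by
  intro ξ ξ' hne
  rw [Function.onFun, Set.disjoint_left]
  rintro t ⟨-, h1⟩ ⟨-, h2⟩
  apply hne
  funext i
  have := (h1 i).symm.trans (h2 i)
  cases hξ : ξ i <;> cases hξ' : ξ' i <;> simp [hξ, hξ'] at this ⊢

open Classical in
lemma Rset_cover {n : ℕ} {X : Fin n → Set ℝ} (hX : ∀ i, IsIcoUnion (X i)) :
    (⋃ ξ ∈ (Finset.univ : Finset (Fin n → Bool)), Rset X ξ) = Set.Ico (0:ℝ) 1 := by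
  ext t
  simp only [Set.mem_iUnion, Finset.mem_univ, exists_prop, true_and]
  constructor
  · rintro ⟨ξ, ht, -⟩; exact ht
  · intro ht
    exact ⟨fun i => decide (t ∈ X i), ht, fun i => by simp⟩

lemma Rset_vol_ne_top {n : ℕ} (X : Fin n → Set ℝ) (ξ : Fin n → Bool) :
    volume (Rset X ξ) ≠ ⊤ := by
  refine ne_top_of_le_ne_top ?_ (measure_mono (fun t ht => ht.1))
  simp [Real.volume_Ico]

lemma sum_Rset_vol {n : ℕ} {X : Fin n → Set ℝ} (hX : ∀ i, IsIcoUnion (X i)) :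
    ∑ ξ : Fin n → Bool, (volume (Rset X ξ)).toReal = 1 := by
  have hms := measure_biUnion_finset (μ := volume)
    (s := (Finset.univ : Finset (Fin n → Bool))) (f := Rset X)
    (fun ξ _ ξ' _ h => Rset_disjoint X h) (fun ξ _ => Rset_measurable hX ξ)
  rw [Rset_cover hX, Real.volume_Ico] at hms
  rw [← ENNReal.toReal_sum (fun ξ _ => Rset_vol_ne_top X ξ), ← hms]
  norm_num

open Classical in
lemma vol_X_eq {n : ℕ} {X : Fin n → Set ℝ} (hX : ∀ i, IsIcoUnion (X i)) (i : Fin n) :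
    (volume (X i)).toReal = ∑ ξ : Fin n → Bool, (volume (Rset X ξ)).toReal * pt n ξ i := by
  have hXi : X i = ⋃ ξ ∈ Finset.univ.filter (fun ξ : Fin n → Bool => ξ i = true), Rset X ξ := by
    ext t
    simp only [Set.mem_iUnion, Finset.mem_filter, Finset.mem_univ, true_and, exists_prop]
    constructor
    · intro ht
      have ht01 : t ∈ Set.Ico (0:ℝ) 1 := (hX i).1 ht
      refine ⟨fun j => decide (t ∈ X j), by simpa using ht, ht01,
        fun j => by simp⟩
    · rintro ⟨ξ, hξi, -, hpat⟩
      exact (hpat i).2 hξi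
  have hms := measure_biUnion_finset (μ := volume)
    (s := Finset.univ.filter (fun ξ : Fin n → Bool => ξ i = true)) (f := Rset X)
    (fun ξ _ ξ' _ h => Rset_disjoint X h) (fun ξ _ => Rset_measurable hX ξ)
  rw [← hXi] at hms
  rw [hms, ENNReal.toReal_sum (fun ξ _ => Rset_vol_ne_top X ξ)]
  rw [Finset.sum_filter]
  refine Finset.sum_congr rfl fun ξ _ => ?_
  unfold pt
  by_cases h : ξ i = true <;> simp [h]

/-- Lemma B: every member of `zuckerValues` is a convex-combination value. -/
lemma memZucker_rep {n : ℕ} {ψ : (Fin n → ℝ) → ℝ} {x : Fin n → ℝ} {w : ℝ}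
    (hw : w ∈ zuckerValues n ψ x) :
    ∃ lam : (Fin n → Bool) → ℝ, (∀ ξ, 0 ≤ lam ξ) ∧ (∀ ξ, lam ξ ≤ 1) ∧ ∑ ξ, lam ξ = 1 ∧
      (∀ i, ∑ ξ, lam ξ * pt n ξ i = x i) ∧ w = ∑ ξ, lam ξ * ψ (pt n ξ) := by
  obtain ⟨X, hX, hvol, hw⟩ := hw
  refine ⟨fun ξ => (volume (Rset X ξ)).toReal, fun ξ => ENNReal.toReal_nonneg, ?_,
    sum_Rset_vol hX, fun i => by rw [← vol_X_eq hX i, hvol i], ?_⟩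
  · intro ξ
    have h1 : volume (Rset X ξ) ≤ 1 := by
      have := measure_mono (μ := volume) (fun t (ht : t ∈ Rset X ξ) => ht.1)
      simpa [Real.volume_Ico] using this
    calc (volume (Rset X ξ)).toReal ≤ (1 : ENNReal).toReal :=
          ENNReal.toReal_mono (by norm_num) h1
      _ = 1 := by norm_num
  · rw [hw]
    unfold Rset pt
    rfl

/-- Lemma A: every convex combination value is a member of `zuckerValues`. -/
lemma rep_memZucker {n : ℕ} (ψ : (Fin n → ℝ) → ℝ) (lam : (Fin n → Bool) → ℝ)
    (h0 : ∀ ξ, 0 ≤ lam ξ) (h1 : ∑ ξ, lam ξ = 1) :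
    (∑ ξ, lam ξ * ψ (pt n ξ)) ∈ zuckerValues n ψ (fun i => ∑ ξ, lam ξ * pt n ξ i) := by
  classical
  set M := Fintype.card (Fin n → Bool) with hM
  set e : Fin M ≃ (Fin n → Bool) := (Fintype.equivFin (Fin n → Bool)).symm with he
  set m : ℕ → ℝ := fun j => if h : j < M then lam (e ⟨j, h⟩) else 0 with hm
  set c : ℕ → ℝ := fun k => ∑ j ∈ Finset.range k, m j with hc
  have hm0 : ∀ j, 0 ≤ m j := by
    intro j; rw [hm]; dsimp only; split
    · exact h0 _
    · exact le_rfl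
  have hcmono : ∀ {k l : ℕ}, k ≤ l → c k ≤ c l := by
    intro k l hkl
    exact Finset.sum_le_sum_of_subset_of_nonneg (Finset.range_subset_range.2 hkl) (fun j _ _ => hm0 j)
  have hc0 : c 0 = 0 := by simp [hc]
  have hcM : c M = 1 := by
    rw [hc]; dsimp only
    rw [← Fin.sum_univ_eq_sum_range]
    have hme : ∀ i : Fin M, m (i : ℕ) = lam (e i) := by
      intro i; simp [hm, i.isLt]
    rw [Finset.sum_congr rfl (fun i _ => hme i), Equiv.sum_comp e lam]
    exact h1
  have hcnonneg : ∀ k, 0 ≤ c k := fun k => hc0 ▸ hcmono (Nat.zero_le k)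
  have hcle1 : ∀ k, k ≤ M → c k ≤ 1 := fun k hk => hcM ▸ hcmono hk
  have hstep : ∀ k, c (k+1) - c k = m k := by
    intro k; rw [hc]; dsimp only; rw [Finset.sum_range_succ]; ring
  set I : ℕ → Set ℝ := fun k => Set.Ico (c k) (c (k+1)) with hI
  have hIdisj : ∀ {k l : ℕ}, k ≠ l → Disjoint (I k) (I l) := by
    intro k l hkl
    rw [Set.disjoint_left]
    rintro t ⟨h1k, h2k⟩ ⟨h1l, h2l⟩
    rcases lt_or_gt_of_ne hkl with h | h
    · have := hcmono (Nat.succ_le_of_lt h)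
      simp only [hI] at *
      linarith
    · have := hcmono (Nat.succ_le_of_lt h)
      simp only [hI] at *
      linarith
  have hIunion : ∀ K, (⋃ k ∈ Finset.range K, I k) = Set.Ico (c 0) (c K) := by
    intro K
    induction K with
    | zero => simp [hI]
    | succ K ih =>
      rw [Finset.range_add_one, Finset.set_biUnion_insert, ih, Set.union_comm,
        Set.Ico_union_Ico_eq_Ico (hcmono (Nat.zero_le K)) (hcmono (Nat.le_succ K))]
  have hcover : ∀ t ∈ Set.Ico (0:ℝ) 1, ∃ k, k < M ∧ t ∈ I k := by
    intro t ht
    have hmem : t ∈ ⋃ k ∈ Finset.range M, I k := by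
      rw [hIunion M, hc0, hcM]; exact ht
    simp only [Set.mem_iUnion, Finset.mem_range, exists_prop] at hmem
    exact hmem
  have hIsub : ∀ k, k < M → I k ⊆ Set.Ico (0:ℝ) 1 :=
    fun k hk => Set.Ico_subset_Ico (hcnonneg k) (hcle1 (k+1) hk)
  set b : ℕ → (Fin n → Bool) := fun k => if h : k < M then e ⟨k, h⟩ else (fun _ => false) with hb
  have hbsymm : ∀ ξ, b ((e.symm ξ : Fin M) : ℕ) = ξ := by
    intro ξ
    simp [hb, (e.symm ξ).isLt]
  have hbe : ∀ (k : ℕ) (h : k < M), b k = e ⟨k, h⟩ := by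
    intro k h; simp [hb, h]
  set X : Fin n → Set ℝ := fun i => ⋃ k ∈ (Finset.range M).filter (fun k => b k i = true), I k
    with hX
  have huniq : ∀ {t : ℝ} {k l : ℕ}, t ∈ I k → t ∈ I l → k = l := by
    intro t k l htk htl
    by_contra hne
    exact (Set.disjoint_left.1 (hIdisj hne)) htk htl
  have hXmem : ∀ {t : ℝ} {k : ℕ}, k < M → t ∈ I k → ∀ i, (t ∈ X i ↔ b k i = true) := by
    intro t k hk htk i
    constructor
    · intro ht
      rw [hX] at ht
      simp only [Set.mem_iUnion, Finset.mem_filter, Finset.mem_range, exists_prop] at ht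
      obtain ⟨l, ⟨hl, hbl⟩, htl⟩ := ht
      rwa [huniq htk htl]
    · intro hbk
      rw [hX]
      simp only [Set.mem_iUnion, Finset.mem_filter, Finset.mem_range, exists_prop]
      exact ⟨k, ⟨hk, hbk⟩, htk⟩
  have hXico : ∀ i, IsIcoUnion (X i) := by
    intro i
    constructor
    · rw [hX]
      refine Set.iUnion₂_subset fun k hk => ?_
      simp only [Finset.mem_filter, Finset.mem_range] at hk
      exact hIsub k hk.1
    · refine ⟨((Finset.range M).filter (fun k => b k i = true)).image
        (fun k => (c k, c (k+1))), ?_⟩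
      rw [hX]
      ext t
      simp only [Set.mem_iUnion, Finset.mem_image, exists_prop]
      constructor
      · rintro ⟨k, hk, htk⟩
        exact ⟨(c k, c (k+1)), ⟨k, hk, rfl⟩, htk⟩
      · rintro ⟨q, ⟨k, hk, hq⟩, htq⟩
        subst hq
        exact ⟨k, hk, htq⟩
  have hItop : ∀ k, volume (I k) ≠ ⊤ := by
    intro k; simp [hI, Real.volume_Ico]
  have hvolI : ∀ k, (volume (I k)).toReal = m k := by
    intro k
    have hle : c k ≤ c (k+1) := hcmono (Nat.le_succ k)
    rw [hI]; dsimp only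
    rw [Real.volume_Ico, ENNReal.toReal_ofReal (by linarith), hstep]
  have hvolX : ∀ i, (volume (X i)).toReal = ∑ ξ, lam ξ * pt n ξ i := by
    intro i
    rw [hX]; dsimp only
    rw [measure_biUnion_finset (fun k _ l _ hkl => hIdisj hkl) (fun k _ => measurableSet_Ico)]
    rw [ENNReal.toReal_sum (fun k _ => hItop k)]
    have hre : ∑ k ∈ (Finset.range M).filter (fun k => b k i = true), (volume (I k)).toReal
        = ∑ ξ ∈ Finset.univ.filter (fun ξ : Fin n → Bool => ξ i = true), lam ξ := by
      refine Finset.sum_nbij' b (fun ξ => ((e.symm ξ : Fin M) : ℕ)) ?_ ?_ ?_ ?_ ?_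
      · intro k hk
        simp only [Finset.mem_filter, Finset.mem_range] at hk ⊢
        exact ⟨Finset.mem_univ _, hk.2⟩
      · intro ξ hξ
        simp only [Finset.mem_filter, Finset.mem_univ, true_and, Finset.mem_range] at hξ ⊢
        exact ⟨(e.symm ξ).isLt, by rw [hbsymm ξ]; exact hξ⟩
      · intro k hk
        simp only [Finset.mem_filter, Finset.mem_range] at hk
        show ((e.symm (b k) : Fin M) : ℕ) = k
        rw [hbe k hk.1, Equiv.symm_apply_apply]
      · intro ξ _
        exact hbsymm ξ
      · intro k hk
        simp only [Finset.mem_filter, Finset.mem_range] at hk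
        rw [hvolI k, hbe k hk.1]
        simp [hm, hk.1]
    rw [hre, Finset.sum_filter]
    refine Finset.sum_congr rfl fun ξ _ => ?_
    unfold pt
    by_cases h : ξ i = true <;> simp [h]
  have hRset : ∀ ξ, Rset X ξ = I ((e.symm ξ : Fin M) : ℕ) := by
    intro ξ
    ext t
    constructor
    · rintro ⟨ht01, hpat⟩
      obtain ⟨k, hk, htk⟩ := hcover t ht01
      have hbk : b k = ξ := by
        funext i
        have hi1 := hXmem hk htk i
        have hiff : (b k i = true) ↔ (ξ i = true) := by rw [← hi1]; exact hpat i
        cases hbi : b k i <;> cases hξi : ξ i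
        · rfl
        · rw [hbi, hξi] at hiff; exact absurd (hiff.2 rfl) (by simp)
        · rw [hbi, hξi] at hiff; exact absurd (hiff.1 rfl) (by simp)
        · rfl
      have hkeq : ((e.symm ξ : Fin M) : ℕ) = k := by
        rw [← hbk, hbe k hk, Equiv.symm_apply_apply]
      rwa [hkeq]
    · intro ht
      have hkM : ((e.symm ξ : Fin M) : ℕ) < M := (e.symm ξ).isLt
      refine ⟨hIsub _ hkM ht, fun i => ?_⟩
      rw [hXmem hkM ht i, hbsymm ξ]
  have hlamR : ∀ ξ, (volume (Rset X ξ)).toReal = lam ξ := by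
    intro ξ
    rw [hRset ξ, hvolI]
    simp [hm, (e.symm ξ).isLt]
  refine ⟨X, hXico, hvolX, ?_⟩
  have hsetEq : ∀ ξ : Fin n → Bool,
      {t ∈ Set.Ico (0:ℝ) 1 | ∀ i, t ∈ X i ↔ ξ i = true} = Rset X ξ := fun ξ => rfl
  refine Finset.sum_congr rfl fun ξ _ => ?_
  rw [hsetEq ξ, hlamR ξ]
  rfl

lemma zucker_nonempty {n : ℕ} (ψ : (Fin n → ℝ) → ℝ) {x : Fin n → ℝ}
    (hx : ∀ i, x i ∈ Set.Icc (0:ℝ) 1) : (zuckerValues n ψ x).Nonempty := by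
  refine ⟨_, fun i => Set.Ico 0 (x i), fun i => ⟨Set.Ico_subset_Ico le_rfl (hx i).2,
    {((0:ℝ), x i)}, by simp⟩, fun i => ?_, rfl⟩
  rw [Real.volume_Ico, sub_zero, ENNReal.toReal_ofReal (hx i).1]

lemma zucker_bddBelow {n : ℕ} (ψ : (Fin n → ℝ) → ℝ) (x : Fin n → ℝ) :
    BddBelow (zuckerValues n ψ x) := by
  refine ⟨-∑ ξ, |ψ (pt n ξ)|, fun w hw => ?_⟩
  obtain ⟨lam, hl0, hl1, -, -, rfl⟩ := memZucker_rep hw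
  rw [← Finset.sum_neg_distrib]
  refine Finset.sum_le_sum fun ξ _ => ?_
  calc -|ψ (pt n ξ)| ≤ -(lam ξ * |ψ (pt n ξ)|) := by
        rw [neg_le_neg_iff]
        calc lam ξ * |ψ (pt n ξ)| ≤ 1 * |ψ (pt n ξ)| :=
              mul_le_mul_of_nonneg_right (hl1 ξ) (abs_nonneg _)
          _ = |ψ (pt n ξ)| := one_mul _
    _ ≤ lam ξ * ψ (pt n ξ) := by
        rw [← mul_neg]
        exact mul_le_mul_of_nonneg_left (neg_abs_le _) (hl0 ξ)

lemma zucker_bddAbove {n : ℕ} (ψ : (Fin n → ℝ) → ℝ) (x : Fin n → ℝ) :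
    BddAbove (zuckerValues n ψ x) := by
  refine ⟨∑ ξ, |ψ (pt n ξ)|, fun w hw => ?_⟩
  obtain ⟨lam, hl0, hl1, -, -, rfl⟩ := memZucker_rep hw
  refine Finset.sum_le_sum fun ξ _ => ?_
  calc lam ξ * ψ (pt n ξ) ≤ lam ξ * |ψ (pt n ξ)| :=
        mul_le_mul_of_nonneg_left (le_abs_self _) (hl0 ξ)
    _ ≤ 1 * |ψ (pt n ξ)| := mul_le_mul_of_nonneg_right (hl1 ξ) (abs_nonneg _)
    _ = |ψ (pt n ξ)| := one_mul _

end ZuckerAux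

/-- Zuckerberg's characterization ... -/
theorem stmt5 (n : ℕ) (ψ : (Fin n → ℝ) → ℝ) :
    convexHull ℝ {p : (Fin n → ℝ) × ℝ | (∀ i, p.1 i = 0 ∨ p.1 i = 1) ∧ p.2 = ψ p.1}
      = {p : (Fin n → ℝ) × ℝ | (∀ i, p.1 i ∈ Set.Icc (0:ℝ) 1) ∧
          sInf (zuckerValues n ψ p.1) ≤ p.2 ∧ p.2 ≤ sSup (zuckerValues n ψ p.1)} := by
  classical
  set G : Set ((Fin n → ℝ) × ℝ) := {p | (∀ i, p.1 i = 0 ∨ p.1 i = 1) ∧ p.2 = ψ p.1} with hGdef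
  have hG : G = Set.range (ZuckerAux.gr n ψ) := by
    ext p
    constructor
    · rintro ⟨h01, hψ⟩
      refine ⟨fun i => decide (p.1 i = 1), ?_⟩
      have hpt : ZuckerAux.pt n (fun i => decide (p.1 i = 1)) = p.1 := by
        funext i
        rcases h01 i with h | h <;> simp [ZuckerAux.pt, h] <;> norm_num
      rw [ZuckerAux.gr, hpt, ← hψ]
    · rintro ⟨ξ, rfl⟩
      refine ⟨fun i => ?_, rfl⟩
      unfold ZuckerAux.gr ZuckerAux.pt
      by_cases h : ξ i = true <;> simp [h]
  have hGfin : G.Finite := hG ▸ Set.finite_range _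
  have hgrmem : ∀ ξ, ZuckerAux.gr n ψ ξ ∈ G := fun ξ => hG ▸ Set.mem_range_self ξ
  ext p
  simp only [Set.mem_setOf_eq]
  constructor
  · intro hp
    have hF : G = ((Finset.univ.image (ZuckerAux.gr n ψ) : Finset _) : Set _) := by
      rw [Finset.coe_image, Finset.coe_univ, Set.image_univ, hG]
    rw [hF, Finset.mem_convexHull'] at hp
    obtain ⟨w, hw0, hw1, hwp⟩ := hp
    have hinj : ∀ x ∈ (Finset.univ : Finset (Fin n → Bool)), ∀ y ∈ Finset.univ,
        ZuckerAux.gr n ψ x = ZuckerAux.gr n ψ y → x = y :=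
      fun a _ b _ h => ZuckerAux.gr_inj ψ h
    rw [Finset.sum_image hinj] at hw1
    rw [Finset.sum_image hinj] at hwp
    set lam : (Fin n → Bool) → ℝ := fun ξ => w (ZuckerAux.gr n ψ ξ) with hlam
    have hl0 : ∀ ξ, 0 ≤ lam ξ :=
      fun ξ => hw0 _ (Finset.mem_image_of_mem _ (Finset.mem_univ ξ))
    have hp1i : ∀ i, p.1 i = ∑ ξ, lam ξ * ZuckerAux.pt n ξ i := by
      intro i
      rw [← hwp, Prod.fst_sum, Finset.sum_apply]
      rfl
    have hp2 : p.2 = ∑ ξ, lam ξ * ψ (ZuckerAux.pt n ξ) := by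
      rw [← hwp, Prod.snd_sum]
      rfl
    have hmem := ZuckerAux.rep_memZucker ψ lam hl0 hw1
    have hx : (fun i => ∑ ξ, lam ξ * ZuckerAux.pt n ξ i) = p.1 := by
      funext i; rw [hp1i i]
    rw [hx] at hmem
    refine ⟨fun i => ⟨?_, ?_⟩, ?_, ?_⟩
    · rw [hp1i i]
      exact Finset.sum_nonneg fun ξ _ => mul_nonneg (hl0 ξ) (ZuckerAux.pt_nonneg ξ i)
    · rw [hp1i i]
      calc ∑ ξ, lam ξ * ZuckerAux.pt n ξ i ≤ ∑ ξ, lam ξ :=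
            Finset.sum_le_sum fun ξ _ => by
              calc lam ξ * ZuckerAux.pt n ξ i ≤ lam ξ * 1 :=
                    mul_le_mul_of_nonneg_left (ZuckerAux.pt_le_one ξ i) (hl0 ξ)
                _ = lam ξ := mul_one _
        _ = 1 := hw1
    · rw [hp2]
      exact csInf_le (ZuckerAux.zucker_bddBelow ψ p.1) hmem
    · rw [hp2]
      exact le_csSup (ZuckerAux.zucker_bddAbove ψ p.1) hmem
  · rintro ⟨hx, hinf, hsup⟩
    set V := zuckerValues n ψ p.1 with hV
    have hVne : V.Nonempty := ZuckerAux.zucker_nonempty ψ hx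
    set C : Set ℝ := {t | (p.1, t) ∈ convexHull ℝ G} with hC
    have hCclosed : IsClosed C := by
      have hpre : C = (fun t : ℝ => (p.1, t)) ⁻¹' (convexHull ℝ G) := rfl
      rw [hpre]
      exact (hGfin.isClosed_convexHull (𝕜 := ℝ)).preimage
        (Continuous.prodMk continuous_const continuous_id)
    have hCconvex : Convex ℝ C := by
      intro t1 ht1 t2 ht2 a b ha hb hab
      have h := (convex_convexHull ℝ G) ht1 ht2 ha hb hab
      have heq : a • ((p.1, t1) : (Fin n → ℝ) × ℝ) + b • ((p.1, t2) : (Fin n → ℝ) × ℝ)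
          = (p.1, a • t1 + b • t2) := by
        rw [Prod.smul_mk, Prod.smul_mk, Prod.mk_add_mk]
        congr 1
        rw [← add_smul, hab, one_smul]
      rw [heq] at h
      exact h
    have hVC : V ⊆ C := by
      intro v hv
      obtain ⟨lam, hl0, hl1, hsum, hxeq, rfl⟩ := ZuckerAux.memZucker_rep hv
      have heq : ∑ ξ, lam ξ • ZuckerAux.gr n ψ ξ
          = ((p.1, ∑ ξ, lam ξ * ψ (ZuckerAux.pt n ξ)) : (Fin n → ℝ) × ℝ) := by
        refine Prod.ext ?_ ?_
        · rw [Prod.fst_sum]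
          funext i
          rw [Finset.sum_apply]
          exact hxeq i
        · rw [Prod.snd_sum]
          rfl
      exact mem_convexHull_of_exists_fintype lam (ZuckerAux.gr n ψ) hl0 hsum
        (fun ξ => hgrmem ξ) heq
    have hinfC : sInf V ∈ C := by
      have h1 : sInf V ∈ closure V := csInf_mem_closure hVne (ZuckerAux.zucker_bddBelow ψ p.1)
      exact hCclosed.closure_subset ((closure_mono hVC) h1)
    have hsupC : sSup V ∈ C := by
      have h1 : sSup V ∈ closure V := csSup_mem_closure hVne (ZuckerAux.zucker_bddAbove ψ p.1)
      exact hCclosed.closure_subset ((closure_mono hVC) h1)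
    have hp2C : p.2 ∈ C := hCconvex.ordConnected.out hinfC hsupC ⟨hinf, hsup⟩
    exact hp2C
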